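/- Let f be a norm on ℝ^p with dual norm f*, let (a, b) be a linear classifier with a ≠ 0, let x_F ∈ ℝ^p satisfy ⟪a, x_F⟫ < b, and let x_CF ∈ ℝ^p with x_CF ≠ x_F. Then x_CF is an optimal counterfactual of x_F under f if and only if there exists λ ∈ ℝ with λ ≠ 0 such that: ⟪a, x_CF⟫ = b, λ · ⟪a, x_CF − x_F⟫ = f(x_CF − x_F), and f*(λ • a) ≤ 1. -/

import Mathlib

open Finset

noncomputable section

/-- The standard inner product on `Fin p → ℝ`. -/
def dot {p : ℕ} (a x : Fin p → ℝ) : ℝ := ∑ k, a k * x k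

/-- `f` is a norm on `ℝ^p`. -/
def IsNorm {p : ℕ} (f : (Fin p → ℝ) → ℝ) : Prop :=
  (∀ x, f x = 0 ↔ x = 0) ∧ (∀ (c : ℝ) (x : Fin p → ℝ), f (c • x) = |c| * f x) ∧
    (∀ x y, f (x + y) ≤ f x + f y)

/-- The dual norm `f*(w) = sup { ⟪w, v⟫ : f v ≤ 1 }`. -/
def dualNorm {p : ℕ} (f : (Fin p → ℝ) → ℝ) (w : Fin p → ℝ) : ℝ :=
  sSup {t : ℝ | ∃ v : Fin p → ℝ, f v ≤ 1 ∧ t = dot w v}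

/-- `xCF` is an optimal counterfactual of the factual `xF` (classified 'No') under norm `f`. -/
def IsOptCF {p : ℕ} (a : Fin p → ℝ) (b : ℝ) (f : (Fin p → ℝ) → ℝ)
    (xF xCF : Fin p → ℝ) : Prop :=
  b ≤ dot a xCF ∧ ∀ z : Fin p → ℝ, b ≤ dot a z → f (xCF - xF) ≤ f (z - xF)

/-- `xRCF` is an optimal robust counterfactual of the factual `xF` (classified 'No')
under norm `f`, with robustness norm `g` and radius `ρ`. -/
def IsOptRCF {p : ℕ} (a : Fin p → ℝ) (b : ℝ) (f g : (Fin p → ℝ) → ℝ) (ρ : ℝ)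
    (xF xRCF : Fin p → ℝ) : Prop :=
  (∀ s : Fin p → ℝ, g s ≤ ρ → b ≤ dot a (xRCF + s)) ∧
    ∀ z : Fin p → ℝ, (∀ s : Fin p → ℝ, g s ≤ ρ → b ≤ dot a (z + s)) →
      f (xRCF - xF) ≤ f (z - xF)

/-- `w` is a subgradient of `f` at `x₀`. -/
def IsSubgradient {p : ℕ} (f : (Fin p → ℝ) → ℝ) (x₀ w : Fin p → ℝ) : Prop :=
  ∀ y : Fin p → ℝ, f x₀ + dot w (y - x₀) ≤ f y

variable {p : ℕ}

lemma dot_smul' (a : Fin p → ℝ) (c : ℝ) (v : Fin p → ℝ) :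
    dot a (c • v) = c * dot a v := by
  simp only [dot, Finset.mul_sum, Pi.smul_apply, smul_eq_mul]
  exact Finset.sum_congr rfl fun i _ => by ring

lemma dot_smul_left (c : ℝ) (a v : Fin p → ℝ) :
    dot (c • a) v = c * dot a v := by
  simp only [dot, Finset.mul_sum, Pi.smul_apply, smul_eq_mul]
  exact Finset.sum_congr rfl fun i _ => by ring

lemma dot_sub' (a x y : Fin p → ℝ) : dot a (x - y) = dot a x - dot a y := by
  simp [dot, mul_sub, Finset.sum_sub_distrib]

lemma dot_add' (a x y : Fin p → ℝ) : dot a (x + y) = dot a x + dot a y := by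
  simp [dot, mul_add, Finset.sum_add_distrib]

lemma IsNorm.zero {f : (Fin p → ℝ) → ℝ} (hf : IsNorm f) : f 0 = 0 :=
  (hf.1 0).2 rfl

lemma IsNorm.nonneg {f : (Fin p → ℝ) → ℝ} (hf : IsNorm f) (x : Fin p → ℝ) :
    0 ≤ f x := by
  have h1 : f (x + (-1 : ℝ) • x) ≤ f x + f ((-1 : ℝ) • x) := hf.2.2 _ _
  have h2 : f ((-1 : ℝ) • x) = f x := by rw [hf.2.1]; simp
  have h3 : x + (-1 : ℝ) • x = 0 := by simp [neg_one_smul]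
  rw [h3, hf.zero, h2] at h1
  linarith

lemma IsNorm.pos {f : (Fin p → ℝ) → ℝ} (hf : IsNorm f) {x : Fin p → ℝ}
    (hx : x ≠ 0) : 0 < f x :=
  lt_of_le_of_ne (hf.nonneg x) (fun h => hx ((hf.1 x).1 h.symm))

lemma IsNorm.sum_le {f : (Fin p → ℝ) → ℝ} (hf : IsNorm f) {ι : Type*}
    (s : Finset ι) (g : ι → Fin p → ℝ) :
    f (∑ i ∈ s, g i) ≤ ∑ i ∈ s, f (g i) := by
  classical
  induction s using Finset.induction with
  | empty => simp [hf.zero]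
  | insert _ _ h ih =>
    rw [Finset.sum_insert h, Finset.sum_insert h]
    exact le_trans (hf.2.2 _ _) (by linarith)

lemma IsNorm.le_C {f : (Fin p → ℝ) → ℝ} (hf : IsNorm f) :
    ∃ C : ℝ, 0 ≤ C ∧ ∀ x, f x ≤ C * ‖x‖ := by
  refine ⟨∑ i, f (Pi.single i 1), Finset.sum_nonneg fun i _ => hf.nonneg _, fun x => ?_⟩
  have hx : x = ∑ i, (x i) • (Pi.single i (1:ℝ) : Fin p → ℝ) := by
    funext j; simp [Finset.sum_apply, Pi.single_apply]
  calc f x = f (∑ i, (x i) • (Pi.single i (1:ℝ) : Fin p → ℝ)) := by rw [← hx]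
    _ ≤ ∑ i, f ((x i) • (Pi.single i (1:ℝ) : Fin p → ℝ)) := hf.sum_le _ _
    _ = ∑ i, |x i| * f (Pi.single i 1) := by simp [hf.2.1]
    _ ≤ ∑ i, ‖x‖ * f (Pi.single i 1) := by
        refine Finset.sum_le_sum fun i _ => ?_
        exact mul_le_mul_of_nonneg_right (by
          simpa using norm_le_pi_norm x i) (hf.nonneg _)
    _ = (∑ i, f (Pi.single i 1)) * ‖x‖ := by rw [← Finset.mul_sum, mul_comm]

lemma IsNorm.continuous {f : (Fin p → ℝ) → ℝ} (hf : IsNorm f) : Continuous f := by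
  obtain ⟨C, hC0, hC⟩ := hf.le_C
  have key : ∀ x y : Fin p → ℝ, f x - f y ≤ C * ‖x - y‖ := by
    intro x y
    have := hf.2.2 (x - y) y
    simp only [sub_add_cancel] at this
    have := hC (x - y)
    linarith
  refine (LipschitzWith.of_dist_le_mul (K := C.toNNReal) (f := f) fun x y => ?_).continuous
  rw [Real.dist_eq, abs_sub_le_iff]
  have h1 := key x y
  have h2 := key y x
  have hn : ‖y - x‖ = ‖x - y‖ := by rw [← neg_sub, norm_neg]
  have hc : (C.toNNReal : ℝ) = max C 0 := by simp [Real.coe_toNNReal']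
  have hd : dist x y = ‖x - y‖ := by rw [dist_eq_norm]
  rw [hd, hc]
  constructor <;> nlinarith [norm_nonneg (x - y), le_max_left C 0, le_max_right (0:ℝ) 0]

lemma IsNorm.lower (hp : 1 ≤ p) {f : (Fin p → ℝ) → ℝ} (hf : IsNorm f) :
    ∃ m : ℝ, 0 < m ∧ ∀ v, m * ‖v‖ ≤ f v := by
  haveI : Nonempty (Fin p) := ⟨⟨0, hp⟩⟩
  have hsph : (Metric.sphere (0 : Fin p → ℝ) 1).Nonempty :=
    NormedSpace.sphere_nonempty.mpr zero_le_one
  obtain ⟨v₀, hv₀, hmin'⟩ := (isCompact_sphere (0 : Fin p → ℝ) 1).exists_isMinOn hsph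
    hf.continuous.continuousOn
  have hmin : ∀ u ∈ Metric.sphere (0 : Fin p → ℝ) 1, f v₀ ≤ f u := fun u hu => hmin' hu
  have hv₀n : ‖v₀‖ = 1 := by simpa using hv₀
  have hv₀ne : v₀ ≠ 0 := by intro h; rw [h] at hv₀n; simp at hv₀n
  refine ⟨f v₀, hf.pos hv₀ne, fun v => ?_⟩
  rcases eq_or_ne v 0 with rfl | hv
  · simp [hf.zero]
  · have hnv : (0:ℝ) < ‖v‖ := norm_pos_iff.mpr hv
    have hu : ‖(‖v‖⁻¹ • v)‖ = 1 := by
      rw [norm_smul]; simp [abs_of_pos (inv_pos.mpr hnv), inv_mul_cancel₀ hnv.ne']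
    have := hmin (‖v‖⁻¹ • v) (by simpa using hu)
    rw [hf.2.1] at this
    rw [abs_of_pos (inv_pos.mpr hnv)] at this
    calc f v₀ * ‖v‖ ≤ (‖v‖⁻¹ * f v) * ‖v‖ := mul_le_mul_of_nonneg_right this hnv.le
      _ = f v := by field_simp

lemma bddAbove_dualSet (hp : 1 ≤ p) {f : (Fin p → ℝ) → ℝ} (hf : IsNorm f)
    (w : Fin p → ℝ) : BddAbove {t : ℝ | ∃ v : Fin p → ℝ, f v ≤ 1 ∧ t = dot w v} := by
  obtain ⟨m, hm, hlow⟩ := hf.lower hp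
  refine ⟨(∑ i, |w i|) * m⁻¹, ?_⟩
  rintro t ⟨v, hv, rfl⟩
  have hnv : ‖v‖ ≤ m⁻¹ := by
    have h1 : m * ‖v‖ ≤ 1 := (hlow v).trans hv
    nlinarith [mul_inv_cancel₀ hm.ne']
  calc dot w v = ∑ i, w i * v i := rfl
    _ ≤ ∑ i, |w i| * m⁻¹ := by
        refine Finset.sum_le_sum fun i _ => ?_
        calc w i * v i ≤ |w i * v i| := le_abs_self _
          _ = |w i| * |v i| := abs_mul _ _
          _ ≤ |w i| * m⁻¹ := by
              have : |v i| ≤ ‖v‖ := by simpa using norm_le_pi_norm v i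
              exact mul_le_mul_of_nonneg_left (this.trans hnv) (abs_nonneg _)
    _ = (∑ i, |w i|) * m⁻¹ := (Finset.sum_mul ..).symm


/-- Optimality conditions for counterfactuals under an arbitrary norm
(Corollary 1): `x_CF` is an optimal counterfactual iff there is `λ ≠ 0` with
`⟪a, x_CF⟫ = b`, `λ⟪a, x_CF − x_F⟫ = f(x_CF − x_F)` and `f*(λ • a) ≤ 1`. -/

theorem cf_optimality_iff {p : ℕ} (hp : 1 ≤ p)
    (f : (Fin p → ℝ) → ℝ) (hf : IsNorm f)
    (a : Fin p → ℝ) (ha : a ≠ 0) (b : ℝ) (xF xCF : Fin p → ℝ)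
    (hxF : dot a xF < b) (hne : xCF ≠ xF) :
    IsOptCF a b f xF xCF ↔
      ∃ l : ℝ, l ≠ 0 ∧ dot a xCF = b ∧
        l * dot a (xCF - xF) = f (xCF - xF) ∧ dualNorm f (l • a) ≤ 1 := by
  have hdne : xCF - xF ≠ 0 := sub_ne_zero.mpr hne
  have hfd : 0 < f (xCF - xF) := hf.pos hdne
  have had : dot a (xCF - xF) = dot a xCF - dot a xF := dot_sub' a _ _
  constructor
  · rintro ⟨hb, hopt⟩
    have heq : dot a xCF = b := by
      by_contra hlt
      have hgt : b < dot a xCF := lt_of_le_of_ne hb (Ne.symm hlt)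
      have hden : 0 < dot a xCF - dot a xF := by linarith
      set t : ℝ := (b - dot a xF) / (dot a xCF - dot a xF) with htdef
      have ht0 : 0 < t := div_pos (by linarith) hden
      have ht1 : t < 1 := (div_lt_one hden).mpr (by linarith)
      have hz : dot a (xF + t • (xCF - xF)) = b := by
        rw [dot_add', dot_smul', had, htdef]
        field_simp
        ring
      have h1 := hopt (xF + t • (xCF - xF)) (le_of_eq hz.symm)
      have h2 : f (xF + t • (xCF - xF) - xF) = t * f (xCF - xF) := by
        rw [add_sub_cancel_left, hf.2.1, abs_of_pos ht0]
      rw [h2] at h1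
      nlinarith
    have hc : 0 < dot a (xCF - xF) := by rw [had, heq]; linarith
    refine ⟨f (xCF - xF) / dot a (xCF - xF), ?_, heq, ?_, ?_⟩
    · positivity
    · field_simp
    · unfold dualNorm
      have hne0 : {t : ℝ | ∃ v : Fin p → ℝ, f v ≤ 1 ∧
          t = dot ((f (xCF - xF) / dot a (xCF - xF)) • a) v}.Nonempty :=
        ⟨0, 0, by simp [hf.zero], by simp [dot]⟩
      apply csSup_le hne0
      rintro t ⟨v, hv, rfl⟩
      rw [dot_smul_left]
      rcases le_or_gt (dot a v) 0 with hav | hav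
      · have hl : 0 < f (xCF - xF) / dot a (xCF - xF) := by positivity
        nlinarith
      · have hz : dot a (xF + (dot a (xCF - xF) / dot a v) • v) = b := by
          rw [dot_add', dot_smul']
          field_simp
          linarith [had, heq]
        have h1 := hopt _ (le_of_eq hz.symm)
        have h2 : f (xF + (dot a (xCF - xF) / dot a v) • v - xF)
            = (dot a (xCF - xF) / dot a v) * f v := by
          rw [add_sub_cancel_left, hf.2.1, abs_of_pos (by positivity)]
        rw [h2] at h1
        have hfv : (dot a (xCF - xF) / dot a v) * f v ≤ dot a (xCF - xF) / dot a v := by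
          have : 0 ≤ dot a (xCF - xF) / dot a v := by positivity
          nlinarith
        have h3 : f (xCF - xF) * dot a v ≤ dot a (xCF - xF) := by
          have h4 : f (xCF - xF) ≤ dot a (xCF - xF) / dot a v := h1.trans hfv
          calc f (xCF - xF) * dot a v ≤ (dot a (xCF - xF) / dot a v) * dot a v :=
                mul_le_mul_of_nonneg_right h4 hav.le
            _ = dot a (xCF - xF) := by field_simp
        rw [div_mul_eq_mul_div, div_le_one hc]
        linarith
  · rintro ⟨l, hl0, hb, hlc, hdual⟩
    have hc : 0 < dot a (xCF - xF) := by rw [had, hb]; linarith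
    have hl : 0 < l := by nlinarith
    refine ⟨hb.ge, fun z hz => ?_⟩
    have hzne : z - xF ≠ 0 := by
      intro h
      rw [sub_eq_zero] at h
      rw [h] at hz; linarith
    have hF : 0 < f (z - xF) := hf.pos hzne
    have hmem : dot (l • a) ((f (z - xF))⁻¹ • (z - xF)) ∈
        {t : ℝ | ∃ v : Fin p → ℝ, f v ≤ 1 ∧ t = dot (l • a) v} := by
      refine ⟨_, ?_, rfl⟩
      rw [hf.2.1, abs_of_pos (inv_pos.mpr hF), inv_mul_cancel₀ hF.ne']
    have hle : dot (l • a) ((f (z - xF))⁻¹ • (z - xF)) ≤ 1 :=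
      le_trans (le_csSup (bddAbove_dualSet hp hf _) hmem) hdual
    rw [dot_smul_left, dot_smul'] at hle
    have haz : dot a (xCF - xF) ≤ dot a (z - xF) := by
      rw [had, dot_sub']; linarith
    have h5 : l * dot a (z - xF) ≤ f (z - xF) := by
      have h6 : l * ((f (z - xF))⁻¹ * dot a (z - xF)) ≤ 1 := hle
      nlinarith [mul_inv_cancel₀ hF.ne']
    nlinarith
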